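/- Let α and β be standard Borel measurable spaces, μ and ν probability measures on α, and κ and η Markov kernels from α to β. Then klDiv (μ ⊗ₘ κ) (ν ⊗ₘ η) = klDiv μ ν + ∫ klDiv (κ a) (η a) dμ(a), where μ ⊗ₘ κ denotes the composition-product measure on α × β given by (μ ⊗ₘ κ)(A × B) = ∫_A κ(a)(B) dμ(a), and the equality holds in [0, ∞] (the integral of the a.e.-defined nonnegative function a ↦ klDiv (κ a) (η a) being taken as a Lebesgue integral with values in [0,∞]). -/

import Mathlib

open MeasureTheory ProbabilityTheory

open scoped ENNReal Classical

namespace KLChain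

lemma neg_log_mul_self_le_one {t : ℝ} (ht : 0 ≤ t) : (-Real.log t) * t ≤ 1 := by
  rcases ht.eq_or_lt with h | h
  · simp [← h]
  · have hlog : Real.log t⁻¹ ≤ t⁻¹ - 1 := Real.log_le_sub_one_of_pos (by positivity)
    rw [Real.log_inv] at hlog
    have : (-Real.log t) * t ≤ (t⁻¹ - 1) * t := by
      exact mul_le_mul_of_nonneg_right hlog ht
    refine this.trans ?_
    rw [sub_mul, inv_mul_cancel₀ h.ne']
    linarith

variable {α : Type*} [MeasurableSpace α] {μ ν : Measure α}

lemma lintegral_ofReal_neg_llr_le [IsFiniteMeasure μ] [IsFiniteMeasure ν] (hμν : μ ≪ ν) :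
    ∫⁻ x, ENNReal.ofReal (-llr μ ν x) ∂μ ≤ ν Set.univ := by
  have hμ : ν.withDensity (μ.rnDeriv ν) = μ := Measure.withDensity_rnDeriv_eq μ ν hμν
  have hrw : ∫⁻ x, ENNReal.ofReal (-llr μ ν x) ∂μ
      = ∫⁻ x, (μ.rnDeriv ν x) * ENNReal.ofReal (-llr μ ν x) ∂ν := by
    have h0 : ∫⁻ x, ENNReal.ofReal (-llr μ ν x) ∂μ
        = ∫⁻ x, ENNReal.ofReal (-llr μ ν x) ∂(ν.withDensity (μ.rnDeriv ν)) := by rw [hμ]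
    rw [h0, lintegral_withDensity_eq_lintegral_mul ν (Measure.measurable_rnDeriv μ ν)
      (g := fun x ↦ ENNReal.ofReal (-llr μ ν x)) (measurable_llr μ ν).neg.ennreal_ofReal]
    rfl
  rw [hrw]
  calc ∫⁻ x, (μ.rnDeriv ν x) * ENNReal.ofReal (-llr μ ν x) ∂ν
      ≤ ∫⁻ _, 1 ∂ν := by
        refine lintegral_mono_ae ?_
        filter_upwards [Measure.rnDeriv_lt_top μ ν] with x hx
        set d := μ.rnDeriv ν x
        have hd : d = ENNReal.ofReal d.toReal := (ENNReal.ofReal_toReal hx.ne).symm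
        rw [llr]
        calc d * ENNReal.ofReal (-Real.log d.toReal)
            = ENNReal.ofReal d.toReal * ENNReal.ofReal (-Real.log d.toReal) := by rw [← hd]
          _ = ENNReal.ofReal (d.toReal * (-Real.log d.toReal)) := by
              rw [ENNReal.ofReal_mul ENNReal.toReal_nonneg]
          _ ≤ ENNReal.ofReal 1 := by
              refine ENNReal.ofReal_le_ofReal ?_
              rw [mul_comm]
              exact neg_log_mul_self_le_one ENNReal.toReal_nonneg
          _ = 1 := ENNReal.ofReal_one
    _ = ν Set.univ := by simp

lemma integrable_min_llr_zero [IsFiniteMeasure μ] [IsFiniteMeasure ν] (hμν : μ ≪ ν) :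
    Integrable (fun x ↦ min (llr μ ν x) 0) μ := by
  refine ⟨((measurable_llr μ ν).min measurable_const).aestronglyMeasurable, ?_⟩
  rw [hasFiniteIntegral_iff_norm]
  have h_eq : ∀ x, ENNReal.ofReal ‖min (llr μ ν x) 0‖ = ENNReal.ofReal (-llr μ ν x) := by
    intro x
    rcases le_total (llr μ ν x) 0 with h | h
    · rw [min_eq_left h, Real.norm_eq_abs, abs_of_nonpos h]
    · rw [min_eq_right h, norm_zero, ENNReal.ofReal_zero,
        ENNReal.ofReal_eq_zero.mpr (by linarith)]
  calc ∫⁻ x, ENNReal.ofReal ‖min (llr μ ν x) 0‖ ∂μ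
      = ∫⁻ x, ENNReal.ofReal (-llr μ ν x) ∂μ := by simp_rw [h_eq]
    _ ≤ ν Set.univ := lintegral_ofReal_neg_llr_le hμν
    _ < ∞ := measure_lt_top _ _

lemma integral_llr_nonneg' [IsProbabilityMeasure μ] [IsProbabilityMeasure ν]
    (hμν : μ ≪ ν) (h : Integrable (llr μ ν) μ) : 0 ≤ ∫ x, llr μ ν x ∂μ := by
  set g : α → ℝ := fun x ↦ ((μ.rnDeriv ν x).toReal)⁻¹ with hg_def
  have hg_meas : Measurable g := (Measure.measurable_rnDeriv μ ν).ennreal_toReal.inv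
  have hg_nonneg : ∀ x, 0 ≤ g x := fun x ↦ by positivity
  have hg_lint : ∫⁻ x, ENNReal.ofReal (g x) ∂μ ≤ 1 := by
    have hμ : ν.withDensity (μ.rnDeriv ν) = μ := Measure.withDensity_rnDeriv_eq μ ν hμν
    have hrw : ∫⁻ x, ENNReal.ofReal (g x) ∂μ
        = ∫⁻ x, (μ.rnDeriv ν x) * ENNReal.ofReal (g x) ∂ν := by
      have h0 : ∫⁻ x, ENNReal.ofReal (g x) ∂μ
          = ∫⁻ x, ENNReal.ofReal (g x) ∂(ν.withDensity (μ.rnDeriv ν)) := by rw [hμ]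
      rw [h0, lintegral_withDensity_eq_lintegral_mul ν (Measure.measurable_rnDeriv μ ν)
        hg_meas.ennreal_ofReal]
      rfl
    rw [hrw]
    calc ∫⁻ x, (μ.rnDeriv ν x) * ENNReal.ofReal (g x) ∂ν
        ≤ ∫⁻ _, 1 ∂ν := by
          refine lintegral_mono_ae ?_
          filter_upwards [Measure.rnDeriv_lt_top μ ν] with x hx
          set d := μ.rnDeriv ν x with hd_def
          rcases eq_or_ne d 0 with h0 | h0
          · simp [h0]
          · have ht : 0 < d.toReal := ENNReal.toReal_pos h0 hx.ne
            have : ENNReal.ofReal (g x) = d⁻¹ := by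
              rw [hg_def]
              simp only [← hd_def]
              rw [ENNReal.ofReal_inv_of_pos ht, ENNReal.ofReal_toReal hx.ne]
            rw [this, ENNReal.mul_inv_cancel h0 hx.ne]
      _ = 1 := by simp
  have hg_int : Integrable g μ := by
    refine ⟨hg_meas.aestronglyMeasurable, ?_⟩
    rw [hasFiniteIntegral_iff_norm]
    calc ∫⁻ x, ENNReal.ofReal ‖g x‖ ∂μ
        = ∫⁻ x, ENNReal.ofReal (g x) ∂μ := by
          simp_rw [Real.norm_eq_abs]
          congr with x
          rw [abs_of_nonneg (hg_nonneg x)]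
      _ ≤ 1 := hg_lint
      _ < ∞ := ENNReal.one_lt_top
  have h_bound : ∀ᵐ x ∂μ, -llr μ ν x ≤ g x - 1 := by
    filter_upwards [Measure.rnDeriv_pos hμν, hμν.ae_le (Measure.rnDeriv_lt_top μ ν)]
      with x h0 hx
    have ht : 0 < (μ.rnDeriv ν x).toReal := ENNReal.toReal_pos h0.ne' hx.ne
    have := Real.log_le_sub_one_of_pos (inv_pos.mpr ht)
    rw [Real.log_inv] at this
    simpa [llr, hg_def] using this
  have h_int_le : ∫ x, -llr μ ν x ∂μ ≤ ∫ x, (g x - 1) ∂μ :=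
    integral_mono_ae h.neg (hg_int.sub (integrable_const 1)) h_bound
  have hgle : ∫ x, g x ∂μ ≤ 1 := by
    rw [integral_eq_lintegral_of_nonneg_ae (Filter.Eventually.of_forall hg_nonneg)
      hg_meas.aestronglyMeasurable]
    calc (∫⁻ x, ENNReal.ofReal (g x) ∂μ).toReal ≤ (1 : ℝ≥0∞).toReal :=
          ENNReal.toReal_mono ENNReal.one_ne_top hg_lint
      _ = 1 := by simp
  rw [integral_neg] at h_int_le
  rw [integral_sub hg_int (integrable_const 1)] at h_int_le
  simp only [integral_const, measure_univ, ENNReal.toReal_one, one_smul, smul_eq_mul, probReal_univ] at h_int_le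
  linarith


section CompProd

variable {α β : Type*} [MeasurableSpace α] [MeasurableSpace β]
  [MeasurableSpace.CountablyGenerated β]
  {μ ν : Measure α} {κ η : Kernel α β}

lemma fst_ac [IsProbabilityMeasure μ] [IsProbabilityMeasure ν]
    [IsMarkovKernel κ] [IsMarkovKernel η]
    (h : μ ⊗ₘ κ ≪ ν ⊗ₘ η) : μ ≪ ν := by
  have h2 : (μ ⊗ₘ κ).fst ≪ (ν ⊗ₘ η).fst := by
    unfold Measure.fst
    exact h.map measurable_fst
  rwa [Measure.fst_compProd, Measure.fst_compProd] at h2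

lemma preimage_mutuallySingularSet (a : α) :
    Prod.mk a ⁻¹' Kernel.mutuallySingularSet κ η = Kernel.mutuallySingularSetSlice κ η a := rfl

lemma ae_ac_of_compProd_ac [IsProbabilityMeasure μ] [IsProbabilityMeasure ν]
    [IsMarkovKernel κ] [IsMarkovKernel η]
    (h : μ ⊗ₘ κ ≪ ν ⊗ₘ η) : ∀ᵐ a ∂μ, κ a ≪ η a := by
  set ξ := Kernel.singularPart κ η with hξ_def
  have hκ : Kernel.withDensity η (Kernel.rnDeriv κ η) + ξ = κ :=
    Kernel.rnDeriv_add_singularPart κ η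
  have hle : μ ⊗ₘ ξ ≤ μ ⊗ₘ κ := by
    rw [← hκ, Measure.compProd_add_right]
    exact Measure.le_add_left (le_refl _)
  have hac : μ ⊗ₘ ξ ≪ ν ⊗ₘ η := (Measure.absolutelyContinuous_of_le hle).trans h
  have hS := Kernel.measurableSet_mutuallySingularSet κ η
  have hsing : μ ⊗ₘ ξ ⟂ₘ ν ⊗ₘ η := by
    refine ⟨(Kernel.mutuallySingularSet κ η)ᶜ, hS.compl, ?_, ?_⟩
    · rw [Measure.compProd_apply hS.compl]
      have h0 : ∀ a, ξ a (Prod.mk a ⁻¹' (Kernel.mutuallySingularSet κ η)ᶜ) = 0 := by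
        intro a
        have : Prod.mk a ⁻¹' (Kernel.mutuallySingularSet κ η)ᶜ
            = (Kernel.mutuallySingularSetSlice κ η a)ᶜ := by
          rw [Set.preimage_compl, preimage_mutuallySingularSet]
        rw [this]
        exact Kernel.singularPart_compl_mutuallySingularSetSlice κ η a
      rw [lintegral_congr h0, lintegral_zero]
    · rw [compl_compl, Measure.compProd_apply hS]
      have h0 : ∀ a, η a (Prod.mk a ⁻¹' Kernel.mutuallySingularSet κ η) = 0 := by
        intro a
        rw [preimage_mutuallySingularSet]
        exact Kernel.measure_mutuallySingularSetSlice κ η a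
      rw [lintegral_congr h0, lintegral_zero]
  have hzero : μ ⊗ₘ ξ = 0 :=
    Measure.eq_zero_of_absolutelyContinuous_of_mutuallySingular hac hsing
  have hint : ∫⁻ a, ξ a Set.univ ∂μ = 0 := by
    have := Measure.compProd_apply (μ := μ) (κ := ξ) MeasurableSet.univ
    rw [hzero] at this
    simpa using this.symm
  rw [lintegral_eq_zero_iff (ξ.measurable_coe MeasurableSet.univ)] at hint
  filter_upwards [hint] with a ha
  rw [← Kernel.singularPart_eq_zero_iff_absolutelyContinuous]
  exact Measure.measure_univ_eq_zero.mp ha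

lemma compProd_withDensity [IsProbabilityMeasure μ] [IsProbabilityMeasure ν]
    [IsMarkovKernel κ] [IsMarkovKernel η]
    (hμν : μ ≪ ν) (hκη : ∀ᵐ a ∂μ, κ a ≪ η a) :
    μ ⊗ₘ κ = (ν ⊗ₘ η).withDensity
      (fun p ↦ μ.rnDeriv ν p.1 * Kernel.rnDeriv κ η p.1 p.2) := by
  have hdk : Measurable (Function.uncurry (Kernel.rnDeriv κ η)) :=
    Kernel.measurable_rnDeriv κ η
  have hd : Measurable (fun p : α × β ↦ μ.rnDeriv ν p.1 * Kernel.rnDeriv κ η p.1 p.2) :=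
    ((Measure.measurable_rnDeriv μ ν).comp measurable_fst).mul (Kernel.measurable_rnDeriv κ η)
  ext s hs
  rw [withDensity_apply _ hs, ← lintegral_indicator hs,
    Measure.lintegral_compProd (hd.indicator hs)]
  set G : α × β → ℝ≥0∞ := (Kernel.mutuallySingularSet κ η).indicator 0 with hG_def
  have h1 : ∀ a, ∫⁻ b, s.indicator
        (fun p : α × β ↦ μ.rnDeriv ν p.1 * Kernel.rnDeriv κ η p.1 p.2) (a, b) ∂(η a)
      = μ.rnDeriv ν a * ∫⁻ b, s.indicator
        (fun p : α × β ↦ Kernel.rnDeriv κ η p.1 p.2) (a, b) ∂(η a) := by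
    intro a
    have hcomp : Measurable (fun b ↦ s.indicator
        (fun p : α × β ↦ Kernel.rnDeriv κ η p.1 p.2) (a, b)) :=
      ((Kernel.measurable_rnDeriv κ η).indicator hs).comp measurable_prodMk_left
    rw [← lintegral_const_mul _ hcomp]
    congr 1 with b
    by_cases hb : (a, b) ∈ s <;> simp [Set.indicator, hb]
  simp_rw [h1]
  have hGm : Measurable (fun p : α × β ↦ s.indicator
      (fun q : α × β ↦ Kernel.rnDeriv κ η q.1 q.2) p) :=
    (Kernel.measurable_rnDeriv κ η).indicator hs
  have hFm : Measurable (fun a ↦ ∫⁻ b, s.indicator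
      (fun q : α × β ↦ Kernel.rnDeriv κ η q.1 q.2) (a, b) ∂(η a)) :=
    hGm.lintegral_kernel_prod_right'
  have hμ : ν.withDensity (μ.rnDeriv ν) = μ := Measure.withDensity_rnDeriv_eq μ ν hμν
  have h2 : ∫⁻ a, μ.rnDeriv ν a * ∫⁻ b, s.indicator
        (fun q : α × β ↦ Kernel.rnDeriv κ η q.1 q.2) (a, b) ∂(η a) ∂ν
      = ∫⁻ a, ∫⁻ b, s.indicator
        (fun q : α × β ↦ Kernel.rnDeriv κ η q.1 q.2) (a, b) ∂(η a) ∂μ := by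
    have h3 := lintegral_withDensity_eq_lintegral_mul ν (Measure.measurable_rnDeriv μ ν) hFm
    rw [hμ] at h3
    rw [h3]
    exact lintegral_congr fun a ↦ rfl
  rw [h2, Measure.compProd_apply hs]
  refine lintegral_congr_ae ?_
  filter_upwards [hκη] with a ha
  have hslice : ∀ b, s.indicator (fun q : α × β ↦ Kernel.rnDeriv κ η q.1 q.2) (a, b)
      = (Prod.mk a ⁻¹' s).indicator (fun b ↦ Kernel.rnDeriv κ η a b) b := by
    intro b
    by_cases hb : (a, b) ∈ s <;> simp [Set.indicator, hb]
  simp_rw [hslice]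
  rw [lintegral_indicator (measurable_prodMk_left hs),
    ← withDensity_apply _ (measurable_prodMk_left hs)]
  have := Kernel.withDensity_rnDeriv_eq (κ := κ) (η := η) ha
  rw [Kernel.withDensity_apply _ hdk] at this
  rw [this]

lemma compProd_ac [IsProbabilityMeasure μ] [IsProbabilityMeasure ν]
    [IsMarkovKernel κ] [IsMarkovKernel η]
    (hμν : μ ≪ ν) (hκη : ∀ᵐ a ∂μ, κ a ≪ η a) : μ ⊗ₘ κ ≪ ν ⊗ₘ η := by
  rw [compProd_withDensity hμν hκη]
  exact withDensity_absolutelyContinuous _ _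

lemma rnDeriv_compProd [IsProbabilityMeasure μ] [IsProbabilityMeasure ν]
    [IsMarkovKernel κ] [IsMarkovKernel η]
    (hμν : μ ≪ ν) (hκη : ∀ᵐ a ∂μ, κ a ≪ η a) :
    (μ ⊗ₘ κ).rnDeriv (ν ⊗ₘ η) =ᵐ[ν ⊗ₘ η]
      fun p ↦ μ.rnDeriv ν p.1 * Kernel.rnDeriv κ η p.1 p.2 := by
  have hd : Measurable (fun p : α × β ↦ μ.rnDeriv ν p.1 * Kernel.rnDeriv κ η p.1 p.2) :=
    ((Measure.measurable_rnDeriv μ ν).comp measurable_fst).mul (Kernel.measurable_rnDeriv κ η)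
  rw [compProd_withDensity hμν hκη]
  exact Measure.rnDeriv_withDensity (ν ⊗ₘ η) hd

lemma integrable_fst_iff [IsProbabilityMeasure μ] [IsMarkovKernel κ] {f : α → ℝ}
    (hf : StronglyMeasurable f) :
    Integrable (fun p : α × β ↦ f p.1) (μ ⊗ₘ κ) ↔ Integrable f μ := by
  have hmap : (μ ⊗ₘ κ).map Prod.fst = μ := by
    have h := Measure.fst_compProd μ κ
    unfold Measure.fst at h
    exact h
  have h := integrable_map_measure (μ := μ ⊗ₘ κ) (f := Prod.fst) (g := f)
    hf.aestronglyMeasurable measurable_fst.aemeasurable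
  rw [hmap] at h
  exact h.symm

end CompProd

section AddIff

variable {γ : Type*} [MeasurableSpace γ] {m : Measure γ} {f g : γ → ℝ}

lemma integrable_add_iff_of_min
    (hf : StronglyMeasurable f) (hg : StronglyMeasurable g)
    (hf' : Integrable (fun x ↦ min (f x) 0) m) (hg' : Integrable (fun x ↦ min (g x) 0) m) :
    Integrable (fun x ↦ f x + g x) m ↔ Integrable f m ∧ Integrable g m := by
  refine ⟨fun h ↦ ?_, fun h ↦ h.1.add h.2⟩
  have hmax : Integrable (fun x ↦ max (f x) 0 + max (g x) 0) m := by
    have heq : (fun x ↦ max (f x) 0 + max (g x) 0)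
        = fun x ↦ (f x + g x) - min (f x) 0 - min (g x) 0 := by
      funext x
      have h1 : max (f x) 0 + min (f x) 0 = f x + 0 := max_add_min _ _
      have h2 : max (g x) 0 + min (g x) 0 = g x + 0 := max_add_min _ _
      linarith
    rw [heq]
    exact (h.sub hf').sub hg'
  have hfpos : Integrable (fun x ↦ max (f x) 0) m := by
    refine hmax.mono' (hf.sup stronglyMeasurable_const).aestronglyMeasurable ?_
    refine Filter.Eventually.of_forall fun x ↦ ?_
    rw [Real.norm_eq_abs, abs_of_nonneg (le_max_right _ _)]
    have : (0:ℝ) ≤ max (g x) 0 := le_max_right _ _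
    linarith
  have hgpos : Integrable (fun x ↦ max (g x) 0) m := by
    refine hmax.mono' (hg.sup stronglyMeasurable_const).aestronglyMeasurable ?_
    refine Filter.Eventually.of_forall fun x ↦ ?_
    rw [Real.norm_eq_abs, abs_of_nonneg (le_max_right _ _)]
    have : (0:ℝ) ≤ max (f x) 0 := le_max_right _ _
    linarith
  constructor
  · have := hfpos.add hf'
    refine this.congr (Filter.Eventually.of_forall fun x ↦ ?_)
    have h1 : max (f x) 0 + min (f x) 0 = f x + 0 := max_add_min _ _
    simp only [Pi.add_apply]
    linarith
  · have := hgpos.add hg'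
    refine this.congr (Filter.Eventually.of_forall fun x ↦ ?_)
    have h1 : max (g x) 0 + min (g x) 0 = g x + 0 := max_add_min _ _
    simp only [Pi.add_apply]
    linarith

end AddIff

end KLChain

/-- Kullback–Leibler divergence `∫ log (dμ/dν) dμ ∈ [0,∞]`: it equals this
integral when `μ ≪ ν` with integrable log-likelihood ratio, and `∞` otherwise. -/
noncomputable def klDiv {α : Type*} [MeasurableSpace α] (μ ν : Measure α) : ℝ≥0∞ :=
  if μ ≪ ν ∧ Integrable (llr μ ν) μ then ENNReal.ofReal (∫ x, llr μ ν x ∂μ) else ∞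

/-- **Chain rule for the KL divergence over composition-products.**
For probability measures `μ, ν` on a standard Borel space `α` and Markov
kernels `κ, η` from `α` to a standard Borel space `β`,
`klDiv (μ ⊗ₘ κ) (ν ⊗ₘ η) = klDiv μ ν + ∫⁻ a, klDiv (κ a) (η a) ∂μ`. -/
theorem klDiv_compProd_chain_rule
    {α β : Type*} [MeasurableSpace α] [StandardBorelSpace α]
    [MeasurableSpace β] [StandardBorelSpace β]
    (μ ν : Measure α) [IsProbabilityMeasure μ] [IsProbabilityMeasure ν]
    (κ η : Kernel α β) [IsMarkovKernel κ] [IsMarkovKernel η] :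
    klDiv (μ ⊗ₘ κ) (ν ⊗ₘ η) = klDiv μ ν + ∫⁻ a, klDiv (κ a) (η a) ∂μ := by
  by_cases hμν : μ ≪ ν
  swap
  · have hLHS : ¬ (μ ⊗ₘ κ ≪ ν ⊗ₘ η) := fun h ↦ hμν (KLChain.fst_ac h)
    rw [klDiv, if_neg (fun h ↦ hLHS h.1), klDiv, if_neg (fun h ↦ hμν h.1), top_add]
  by_cases hκη : ∀ᵐ a ∂μ, κ a ≪ η a
  swap
  · have hLHS : ¬ (μ ⊗ₘ κ ≪ ν ⊗ₘ η) := fun h ↦ hκη (KLChain.ae_ac_of_compProd_ac h)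
    rw [klDiv, if_neg (fun h ↦ hLHS h.1)]
    have hs : MeasurableSet {a | κ a ≪ η a} := Kernel.measurableSet_absolutelyContinuous κ η
    have hpos : μ {a | κ a ≪ η a}ᶜ ≠ 0 := by
      intro h0
      exact hκη (ae_iff.mpr h0)
    have htop : ∫⁻ a, klDiv (κ a) (η a) ∂μ = ∞ := by
      refine eq_top_iff.mpr ?_
      calc (∞ : ℝ≥0∞) = ∞ * μ {a | κ a ≪ η a}ᶜ := (ENNReal.top_mul hpos).symm
        _ = ∫⁻ _ in {a | κ a ≪ η a}ᶜ, ∞ ∂μ := by rw [setLIntegral_const]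
        _ = ∫⁻ a in {a | κ a ≪ η a}ᶜ, klDiv (κ a) (η a) ∂μ := by
            refine setLIntegral_congr_fun hs.compl (fun a ha ↦ ?_)
            rw [klDiv, if_neg (fun h ↦ ha h.1)]
        _ ≤ ∫⁻ a, klDiv (κ a) (η a) ∂μ := setLIntegral_le_lintegral _ _
    rw [htop, add_top]
  -- main case
  have h_ac : μ ⊗ₘ κ ≪ ν ⊗ₘ η := KLChain.compProd_ac hμν hκη
  set G : α × β → ℝ := fun p ↦ Real.log (Kernel.rnDeriv κ η p.1 p.2).toReal with hG_def
  have hG_meas : StronglyMeasurable G :=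
    ((Kernel.measurable_rnDeriv κ η).ennreal_toReal.log).stronglyMeasurable
  have hG_ae : ∀ᵐ a ∂μ, (fun b ↦ G (a, b)) =ᵐ[κ a] llr (κ a) (η a) := by
    filter_upwards [hκη] with a ha
    filter_upwards [ha.ae_le (Kernel.rnDeriv_eq_rnDeriv_measure (κ := κ) (η := η) (a := a))]
      with b hb
    simp only [hG_def, llr, hb]
  have h_llr : llr (μ ⊗ₘ κ) (ν ⊗ₘ η) =ᵐ[μ ⊗ₘ κ] fun p ↦ llr μ ν p.1 + G p := by
    have h1 : ∀ᵐ p ∂(μ ⊗ₘ κ), (μ ⊗ₘ κ).rnDeriv (ν ⊗ₘ η) p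
        = μ.rnDeriv ν p.1 * Kernel.rnDeriv κ η p.1 p.2 :=
      h_ac.ae_le (KLChain.rnDeriv_compProd hμν hκη)
    have h2 : ∀ᵐ p ∂(μ ⊗ₘ κ), 0 < μ.rnDeriv ν p.1 ∧ μ.rnDeriv ν p.1 < ∞ := by
      have hf : Measurable (fun p : α × β ↦ μ.rnDeriv ν p.1) :=
        (Measure.measurable_rnDeriv μ ν).comp measurable_fst
      have hm : MeasurableSet {p : α × β | 0 < μ.rnDeriv ν p.1 ∧ μ.rnDeriv ν p.1 < ∞} :=
        hf measurableSet_Ioo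
      rw [Measure.ae_compProd_iff hm]
      filter_upwards [Measure.rnDeriv_pos hμν, hμν.ae_le (Measure.rnDeriv_lt_top μ ν)]
        with a ha1 ha2
      exact Filter.Eventually.of_forall fun b ↦ ⟨ha1, ha2⟩
    have h3 : ∀ᵐ p ∂(μ ⊗ₘ κ),
        0 < Kernel.rnDeriv κ η p.1 p.2 ∧ Kernel.rnDeriv κ η p.1 p.2 < ∞ := by
      have hf : Measurable (fun p : α × β ↦ Kernel.rnDeriv κ η p.1 p.2) :=
        Kernel.measurable_rnDeriv κ η
      have hm : MeasurableSet {p : α × β |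
          0 < Kernel.rnDeriv κ η p.1 p.2 ∧ Kernel.rnDeriv κ η p.1 p.2 < ∞} :=
        hf measurableSet_Ioo
      rw [Measure.ae_compProd_iff hm]
      filter_upwards [hκη] with a ha
      filter_upwards [Kernel.rnDeriv_pos ha, ha.ae_le (Kernel.rnDeriv_lt_top κ η)]
        with b hb1 hb2
      exact ⟨hb1, hb2⟩
    filter_upwards [h1, h2, h3] with p hp hp2 hp3
    rw [llr, hp, ENNReal.toReal_mul, Real.log_mul (ENNReal.toReal_pos hp2.1.ne' hp2.2.ne).ne'
      (ENNReal.toReal_pos hp3.1.ne' hp3.2.ne).ne']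
    rfl
  have hF_meas : StronglyMeasurable (llr μ ν) := stronglyMeasurable_llr μ ν
  have hF1neg : Integrable (fun p : α × β ↦ min (llr μ ν p.1) 0) (μ ⊗ₘ κ) := by
    rw [KLChain.integrable_fst_iff (((measurable_llr μ ν).min
      measurable_const).stronglyMeasurable)]
    exact KLChain.integrable_min_llr_zero hμν
  have hGneg : Integrable (fun p : α × β ↦ min (G p) 0) (μ ⊗ₘ κ) := by
    refine ⟨((hG_meas.measurable.min measurable_const).stronglyMeasurable).aestronglyMeasurable,
      ?_⟩
    rw [hasFiniteIntegral_iff_norm]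
    have h_eq : ∀ p, ENNReal.ofReal ‖min (G p) 0‖ = ENNReal.ofReal (-G p) := by
      intro p
      rcases le_total (G p) 0 with h | h
      · rw [min_eq_left h, Real.norm_eq_abs, abs_of_nonpos h]
      · rw [min_eq_right h, norm_zero, ENNReal.ofReal_zero,
          ENNReal.ofReal_eq_zero.mpr (by linarith)]
    have hle : ∫⁻ p, ENNReal.ofReal ‖min (G p) 0‖ ∂(μ ⊗ₘ κ) ≤ 1 := by
      calc ∫⁻ p, ENNReal.ofReal ‖min (G p) 0‖ ∂(μ ⊗ₘ κ)
          = ∫⁻ p, ENNReal.ofReal (-G p) ∂(μ ⊗ₘ κ) := by simp_rw [h_eq]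
        _ = ∫⁻ a, ∫⁻ b, ENNReal.ofReal (-G (a, b)) ∂κ a ∂μ :=
            Measure.lintegral_compProd hG_meas.measurable.neg.ennreal_ofReal
        _ ≤ ∫⁻ _, 1 ∂μ := by
            refine lintegral_mono_ae ?_
            filter_upwards [hκη, hG_ae] with a ha hGa
            have heq2 : ∫⁻ b, ENNReal.ofReal (-G (a, b)) ∂κ a
                = ∫⁻ b, ENNReal.ofReal (-llr (κ a) (η a) b) ∂κ a :=
              lintegral_congr_ae (hGa.mono fun b hb ↦ by
                have hb' : G (a, b) = llr (κ a) (η a) b := hb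
                show ENNReal.ofReal (-G (a, b)) = ENNReal.ofReal (-llr (κ a) (η a) b)
                rw [hb'])
            rw [heq2]
            calc ∫⁻ b, ENNReal.ofReal (-llr (κ a) (η a) b) ∂κ a
                ≤ (η a) Set.univ := KLChain.lintegral_ofReal_neg_llr_le ha
              _ = 1 := measure_univ
        _ = 1 := by simp
    exact lt_of_le_of_lt hle ENNReal.one_lt_top
  have h_norm_iff : (∀ᵐ a ∂μ, Integrable (fun b ↦ G (a, b)) (κ a)) →
      (Integrable (fun a ↦ ∫ b, ‖G (a, b)‖ ∂κ a) μ
        ↔ Integrable (fun a ↦ ∫ b, G (a, b) ∂κ a) μ) := by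
    intro hB
    have hSM1 : StronglyMeasurable (fun a ↦ ∫ b, ‖G (a, b)‖ ∂κ a) :=
      hG_meas.norm.integral_kernel_prod_right'
    have hSM2 : StronglyMeasurable (fun a ↦ ∫ b, G (a, b) ∂κ a) :=
      hG_meas.integral_kernel_prod_right'
    have hdiff_bound : ∀ᵐ a ∂μ, ‖∫ b, ‖G (a, b)‖ ∂κ a - ∫ b, G (a, b) ∂κ a‖ ≤ 2 := by
      filter_upwards [hκη, hG_ae, hB] with a ha hGa hInt
      have hmx_meas : Measurable (fun b ↦ max (-G (a, b)) 0) :=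
        ((hG_meas.measurable.comp measurable_prodMk_left).neg.max measurable_const)
      have hmx_le : ∫ b, max (-G (a, b)) 0 ∂κ a ≤ 1 := by
        have hrepr : ∫ b, max (-G (a, b)) 0 ∂κ a
            = (∫⁻ b, ENNReal.ofReal (max (-G (a, b)) 0) ∂κ a).toReal :=
          integral_eq_lintegral_of_nonneg_ae
            (Filter.Eventually.of_forall fun b ↦ le_max_right _ _)
            hmx_meas.aestronglyMeasurable
        rw [hrepr]
        have heq3 : ∫⁻ b, ENNReal.ofReal (max (-G (a, b)) 0) ∂κ a
            = ∫⁻ b, ENNReal.ofReal (-llr (κ a) (η a) b) ∂κ a := by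
          refine lintegral_congr_ae (hGa.mono fun b hb ↦ ?_)
          have hb' : G (a, b) = llr (κ a) (η a) b := hb
          show ENNReal.ofReal (max (-G (a, b)) 0) = ENNReal.ofReal (-llr (κ a) (η a) b)
          rw [← hb']
          rcases le_total (G (a, b)) 0 with h | h
          · rw [max_eq_left (by linarith)]
          · rw [max_eq_right (by linarith), ENNReal.ofReal_zero,
              Eq.comm, ENNReal.ofReal_eq_zero]
            linarith
        have hle2 : ∫⁻ b, ENNReal.ofReal (max (-G (a, b)) 0) ∂κ a ≤ 1 := by
          rw [heq3]
          calc ∫⁻ b, ENNReal.ofReal (-llr (κ a) (η a) b) ∂κ a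
              ≤ (η a) Set.univ := KLChain.lintegral_ofReal_neg_llr_le ha
            _ = 1 := measure_univ
        calc (∫⁻ b, ENNReal.ofReal (max (-G (a, b)) 0) ∂κ a).toReal
            ≤ (1 : ℝ≥0∞).toReal := ENNReal.toReal_mono ENNReal.one_ne_top hle2
          _ = 1 := by simp
      have h_eq4 : ∀ b, ‖G (a, b)‖ - G (a, b) = 2 * max (-G (a, b)) 0 := by
        intro b
        rcases le_total (G (a, b)) 0 with h | h
        · rw [Real.norm_eq_abs, abs_of_nonpos h, max_eq_left (by linarith)]; ring
        · rw [Real.norm_eq_abs, abs_of_nonneg h, max_eq_right (by linarith)]; ring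
      rw [← integral_sub hInt.norm hInt]
      have h5 : ∫ b, (‖G (a, b)‖ - G (a, b)) ∂κ a = 2 * ∫ b, max (-G (a, b)) 0 ∂κ a := by
        rw [← integral_const_mul]
        exact integral_congr_ae (Filter.Eventually.of_forall fun b ↦ h_eq4 b)
      rw [Real.norm_eq_abs, abs_of_nonneg (integral_nonneg fun b ↦ by
        simp only [Pi.sub_apply]
        exact sub_nonneg.mpr (le_abs_self _)), h5]
      linarith
    have hdiff_int : Integrable
        (fun a ↦ ∫ b, ‖G (a, b)‖ ∂κ a - ∫ b, G (a, b) ∂κ a) μ :=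
      Integrable.mono' (integrable_const 2) (hSM1.sub hSM2).aestronglyMeasurable hdiff_bound
    constructor
    · intro h
      exact (h.sub hdiff_int).congr (Filter.Eventually.of_forall fun a ↦ by
        simp only [Pi.sub_apply]; ring)
    · intro h
      exact (h.add hdiff_int).congr (Filter.Eventually.of_forall fun a ↦ by
        simp only [Pi.add_apply]; ring)
  have h_int_iff : Integrable (llr (μ ⊗ₘ κ) (ν ⊗ₘ η)) (μ ⊗ₘ κ)
      ↔ Integrable (llr μ ν) μ ∧ (∀ᵐ a ∂μ, Integrable (fun b ↦ G (a, b)) (κ a))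
        ∧ Integrable (fun a ↦ ∫ b, G (a, b) ∂κ a) μ := by
    have hFfst : StronglyMeasurable (fun p : α × β ↦ llr μ ν p.1) :=
      hF_meas.comp_measurable measurable_fst
    have hiff1 : Integrable (llr (μ ⊗ₘ κ) (ν ⊗ₘ η)) (μ ⊗ₘ κ)
        ↔ Integrable (fun p ↦ llr μ ν p.1 + G p) (μ ⊗ₘ κ) := integrable_congr h_llr
    have hiff2 := KLChain.integrable_add_iff_of_min hFfst hG_meas hF1neg hGneg
    refine hiff1.trans (hiff2.trans ?_)
    rw [KLChain.integrable_fst_iff hF_meas,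
      Measure.integrable_compProd_iff hG_meas.aestronglyMeasurable]
    constructor
    · rintro ⟨hA, hB, hN⟩
      exact ⟨hA, hB, (h_norm_iff hB).mp hN⟩
    · rintro ⟨hA, hB, hC⟩
      exact ⟨hA, hB, (h_norm_iff hB).mpr hC⟩
  have hφ : ∫⁻ a, klDiv (κ a) (η a) ∂μ
      = ∫⁻ a, (if Integrable (fun b ↦ G (a, b)) (κ a)
          then ENNReal.ofReal (∫ b, G (a, b) ∂κ a) else ∞) ∂μ := by
    refine lintegral_congr_ae ?_
    filter_upwards [hκη, hG_ae] with a ha hGa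
    by_cases hI : Integrable (fun b ↦ G (a, b)) (κ a)
    · rw [klDiv, if_pos ⟨ha, (integrable_congr hGa).mp hI⟩, if_pos hI]
      congr 1
      exact (integral_congr_ae hGa).symm
    · rw [klDiv, if_neg, if_neg hI]
      exact fun h ↦ hI ((integrable_congr hGa).mpr h.2)
  by_cases hA : Integrable (llr μ ν) μ
  swap
  · rw [klDiv, if_neg (fun h ↦ hA (h_int_iff.mp h.2).1), klDiv, if_neg (fun h ↦ hA h.2),
      top_add]
  by_cases hB : ∀ᵐ a ∂μ, Integrable (fun b ↦ G (a, b)) (κ a)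
  swap
  · rw [klDiv, if_neg (fun h ↦ hB (h_int_iff.mp h.2).2.1), hφ]
    have hs : MeasurableSet {a | Integrable (fun b ↦ G (a, b)) (κ a)} :=
      measurableSet_kernel_integrable hG_meas
    have hpos : μ {a | Integrable (fun b ↦ G (a, b)) (κ a)}ᶜ ≠ 0 := fun h0 ↦ hB (ae_iff.mpr h0)
    have htop : ∫⁻ a, (if Integrable (fun b ↦ G (a, b)) (κ a)
        then ENNReal.ofReal (∫ b, G (a, b) ∂κ a) else ∞) ∂μ = ∞ := by
      refine eq_top_iff.mpr ?_
      calc (∞ : ℝ≥0∞) = ∞ * μ {a | Integrable (fun b ↦ G (a, b)) (κ a)}ᶜ :=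
            (ENNReal.top_mul hpos).symm
        _ = ∫⁻ _ in {a | Integrable (fun b ↦ G (a, b)) (κ a)}ᶜ, ∞ ∂μ := by
            rw [setLIntegral_const]
        _ = ∫⁻ a in {a | Integrable (fun b ↦ G (a, b)) (κ a)}ᶜ,
              (if Integrable (fun b ↦ G (a, b)) (κ a)
                then ENNReal.ofReal (∫ b, G (a, b) ∂κ a) else ∞) ∂μ := by
            refine setLIntegral_congr_fun hs.compl
              (fun a ha ↦ ?_)
            exact (if_neg (show ¬ Integrable (fun b ↦ G (a, b)) (κ a) from ha)).symm
        _ ≤ _ := setLIntegral_le_lintegral _ _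
    rw [htop, add_top]
  have hnn : ∀ᵐ a ∂μ, 0 ≤ ∫ b, G (a, b) ∂κ a := by
    filter_upwards [hκη, hG_ae, hB] with a ha hGa hI
    rw [integral_congr_ae hGa]
    exact KLChain.integral_llr_nonneg' ha ((integrable_congr hGa).mp hI)
  have h1 : ∫⁻ a, (if Integrable (fun b ↦ G (a, b)) (κ a)
        then ENNReal.ofReal (∫ b, G (a, b) ∂κ a) else ∞) ∂μ
      = ∫⁻ a, ENNReal.ofReal (∫ b, G (a, b) ∂κ a) ∂μ :=
    lintegral_congr_ae (hB.mono fun a hI ↦ by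
      show (if Integrable (fun b ↦ G (a, b)) (κ a)
        then ENNReal.ofReal (∫ b, G (a, b) ∂κ a) else ∞) = ENNReal.ofReal (∫ b, G (a, b) ∂κ a)
      exact if_pos hI)
  by_cases hC : Integrable (fun a ↦ ∫ b, G (a, b) ∂κ a) μ
  swap
  · rw [klDiv, if_neg (fun h ↦ hC (h_int_iff.mp h.2).2.2), hφ, h1]
    have hSM2 : StronglyMeasurable (fun a ↦ ∫ b, G (a, b) ∂κ a) :=
      hG_meas.integral_kernel_prod_right'
    have h2 : ∫⁻ a, ENNReal.ofReal (∫ b, G (a, b) ∂κ a) ∂μ = ∞ := by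
      by_contra h2
      refine hC ⟨hSM2.aestronglyMeasurable, ?_⟩
      rw [hasFiniteIntegral_iff_norm]
      have heq : ∫⁻ a, ENNReal.ofReal ‖∫ b, G (a, b) ∂κ a‖ ∂μ
          = ∫⁻ a, ENNReal.ofReal (∫ b, G (a, b) ∂κ a) ∂μ :=
        lintegral_congr_ae (hnn.mono fun a h ↦ by
          show ENNReal.ofReal ‖∫ b, G (a, b) ∂κ a‖ = ENNReal.ofReal (∫ b, G (a, b) ∂κ a)
          rw [Real.norm_eq_abs, abs_of_nonneg h])
      rw [heq]
      exact lt_top_iff_ne_top.mpr h2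
    rw [h2, add_top]
  · have hint : Integrable (llr (μ ⊗ₘ κ) (ν ⊗ₘ η)) (μ ⊗ₘ κ) := h_int_iff.mpr ⟨hA, hB, hC⟩
    rw [klDiv, if_pos ⟨h_ac, hint⟩, klDiv, if_pos ⟨hμν, hA⟩, hφ, h1]
    have hIntG : Integrable G (μ ⊗ₘ κ) := by
      rw [Measure.integrable_compProd_iff hG_meas.aestronglyMeasurable]
      exact ⟨hB, (h_norm_iff hB).mpr hC⟩
    have hIntF : Integrable (fun p : α × β ↦ llr μ ν p.1) (μ ⊗ₘ κ) :=
      (KLChain.integrable_fst_iff hF_meas).mpr hA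
    have hmap : (μ ⊗ₘ κ).map Prod.fst = μ := by
      have h := Measure.fst_compProd μ κ
      unfold Measure.fst at h
      exact h
    have hval : ∫ p, llr (μ ⊗ₘ κ) (ν ⊗ₘ η) p ∂(μ ⊗ₘ κ)
        = ∫ x, llr μ ν x ∂μ + ∫ a, ∫ b, G (a, b) ∂κ a ∂μ := by
      rw [integral_congr_ae h_llr]
      have hadd : ∫ p, (llr μ ν p.1 + G p) ∂(μ ⊗ₘ κ)
          = ∫ p, llr μ ν p.1 ∂(μ ⊗ₘ κ) + ∫ p, G p ∂(μ ⊗ₘ κ) := integral_add hIntF hIntG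
      rw [hadd]
      congr 1
      · rw [Measure.integral_compProd hIntF]
        refine integral_congr_ae (Filter.Eventually.of_forall fun a ↦ ?_)
        simp
      · exact Measure.integral_compProd hIntG
    have hnn2 : 0 ≤ ∫ a, ∫ b, G (a, b) ∂κ a ∂μ := integral_nonneg_of_ae hnn
    rw [← ofReal_integral_eq_lintegral_ofReal hC hnn, hval,
      ENNReal.ofReal_add (KLChain.integral_llr_nonneg' hμν hA) hnn2]
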